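/- Let n be a natural number, let M be a finite subset of Fin n, and let B be a finite collection of subsets of Fin n such that every b ∈ B is nonempty, the sets in B are pairwise disjoint, and every b ∈ B is disjoint from M. Let d = |M| + ∑_{b ∈ B} (|b| − 1). Then the number of functions ω : Fin n → Bool satisfying both (i) ω(i) = true for all i ∈ M, and (ii) for every b ∈ B and all i, j ∈ b, ω(i) = ω(j), is exactly 2^{n − d}; consequently, under the uniform distribution on the 2^n functions Fin n → Bool, the probability of this event is 2^{−d}. -/
import Mathlib

lemma count_fixed (n : ℕ) (M : Finset (Fin n)) (v : Fin n → Bool) :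
    (Finset.univ.filter (fun ω : Fin n → Bool => ∀ i ∈ M, ω i = v i)).card
      = 2 ^ (n - M.card) := by
  have : (Finset.univ.filter (fun ω : Fin n → Bool => ∀ i ∈ M, ω i = v i)).card
      = (Finset.univ : Finset ({x // x ∈ Mᶜ} → Bool)).card := by
    apply Finset.card_bij' (fun ω _ => fun x => ω x.1)
      (fun f _ => fun i => if h : i ∈ Mᶜ then f ⟨i, h⟩ else v i)
    · intro ω hω
      funext i
      by_cases h : i ∈ Mᶜ
      · rw [dif_pos h]
      · rw [dif_neg h]
        exact ((Finset.mem_filter.mp hω).2 i (by simpa using h)).symm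
    · intro f hf
      funext x
      simp
    · intro ω hω
      exact Finset.mem_univ _
    · intro f hf
      simp only [Finset.mem_filter, Finset.mem_univ, true_and]
      intro i hi
      rw [dif_neg (by simpa using hi)]
  rw [this]
  simp [Finset.card_univ, Finset.card_compl]

lemma count_main (n : ℕ) (B : Finset (Finset (Fin n))) :
    ∀ (M : Finset (Fin n)) (v : Fin n → Bool),
      (∀ b ∈ B, b.Nonempty) →
      (∀ b ∈ B, ∀ b' ∈ B, b ≠ b' → Disjoint b b') →
      (∀ b ∈ B, Disjoint b M) →
      (Finset.univ.filter (fun ω : Fin n → Bool =>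
          (∀ i ∈ M, ω i = v i) ∧ ∀ b ∈ B, ∀ i ∈ b, ∀ j ∈ b, ω i = ω j)).card
        = 2 ^ B.card * 2 ^ (n - (M.card + ∑ b ∈ B, b.card)) := by
  induction B using Finset.induction_on with
  | empty =>
    intro M v _ _ _
    simp [count_fixed n M v]
  | @insert b B hbB ih =>
    intro M v hne hdisj hM
    classical
    obtain ⟨i0, hi0⟩ := hne b (Finset.mem_insert_self b B)
    have hbM : Disjoint b M := hM b (Finset.mem_insert_self b B)
    -- predicates
    have key : ∀ c : Bool,
        (Finset.univ.filter (fun ω : Fin n → Bool =>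
          (∀ i ∈ M ∪ b, ω i = (fun i => if i ∈ b then c else v i) i) ∧
            ∀ b' ∈ B, ∀ i ∈ b', ∀ j ∈ b', ω i = ω j)).card
        = 2 ^ B.card * 2 ^ (n - ((M ∪ b).card + ∑ b' ∈ B, b'.card)) := by
      intro c
      apply ih (M ∪ b) (fun i => if i ∈ b then c else v i)
      · intro b' hb'; exact hne b' (Finset.mem_insert_of_mem hb')
      · intro b' hb' b'' hb'' hne'
        exact hdisj b' (Finset.mem_insert_of_mem hb') b'' (Finset.mem_insert_of_mem hb'') hne'
      · intro b' hb'
        rw [Finset.disjoint_union_right]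
        refine ⟨hM b' (Finset.mem_insert_of_mem hb'), ?_⟩
        exact (hdisj b (Finset.mem_insert_self b B) b' (Finset.mem_insert_of_mem hb')
          (by rintro rfl; exact hbB hb')).symm
    -- split the filter
    have hsplit : (Finset.univ.filter (fun ω : Fin n → Bool =>
        (∀ i ∈ M, ω i = v i) ∧ ∀ c ∈ insert b B, ∀ i ∈ c, ∀ j ∈ c, ω i = ω j)) =
        (Finset.univ.filter (fun ω : Fin n → Bool =>
          (∀ i ∈ M ∪ b, ω i = (fun i => if i ∈ b then true else v i) i) ∧
            ∀ b' ∈ B, ∀ i ∈ b', ∀ j ∈ b', ω i = ω j)) ∪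
        (Finset.univ.filter (fun ω : Fin n → Bool =>
          (∀ i ∈ M ∪ b, ω i = (fun i => if i ∈ b then false else v i) i) ∧
            ∀ b' ∈ B, ∀ i ∈ b', ∀ j ∈ b', ω i = ω j)) := by
      ext ω
      simp only [Finset.mem_filter, Finset.mem_univ, true_and, Finset.mem_union,
        Finset.mem_insert]
      constructor
      · rintro ⟨hMv, hconst⟩
        have hrest : ∀ b' ∈ B, ∀ i ∈ b', ∀ j ∈ b', ω i = ω j := fun b' hb' =>
          hconst b' (Or.inr hb')
        have hcb : ∀ i ∈ b, ω i = ω i0 := fun i hi =>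
          hconst b (Or.inl rfl) i hi i0 hi0
        cases h0 : ω i0 with
        | true =>
          left
          refine ⟨?_, hrest⟩
          intro i hi
          rcases hi with hi | hi
          · rw [if_neg (fun hib => (Finset.disjoint_left.mp hbM hib hi))]
            exact hMv i hi
          · rw [if_pos hi, hcb i hi, h0]
        | false =>
          right
          refine ⟨?_, hrest⟩
          intro i hi
          rcases hi with hi | hi
          · rw [if_neg (fun hib => (Finset.disjoint_left.mp hbM hib hi))]
            exact hMv i hi
          · rw [if_pos hi, hcb i hi, h0]
      · rintro (⟨hMv, hrest⟩ | ⟨hMv, hrest⟩) <;>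
        · constructor
          · intro i hi
            have := hMv i (Or.inl hi)
            rwa [if_neg (fun hib => (Finset.disjoint_left.mp hbM hib hi))] at this
          · intro c hc
            rcases hc with rfl | hc
            · intro i hi j hj
              rw [hMv i (Or.inr hi), hMv j (Or.inr hj)]
              simp [hi, hj]
            · exact hrest c hc
    have hdisjf : Disjoint
        (Finset.univ.filter (fun ω : Fin n → Bool =>
          (∀ i ∈ M ∪ b, ω i = (fun i => if i ∈ b then true else v i) i) ∧
            ∀ b' ∈ B, ∀ i ∈ b', ∀ j ∈ b', ω i = ω j))
        (Finset.univ.filter (fun ω : Fin n → Bool =>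
          (∀ i ∈ M ∪ b, ω i = (fun i => if i ∈ b then false else v i) i) ∧
            ∀ b' ∈ B, ∀ i ∈ b', ∀ j ∈ b', ω i = ω j)) := by
      rw [Finset.disjoint_left]
      intro ω h1 h2
      have e1 := (Finset.mem_filter.mp h1).2.1 i0 (Finset.mem_union_right M hi0)
      have e2 := (Finset.mem_filter.mp h2).2.1 i0 (Finset.mem_union_right M hi0)
      simp [hi0] at e1 e2
      rw [e1] at e2
      simp at e2
    have hMb : (M ∪ b).card = M.card + b.card := by
      rw [Finset.card_union_of_disjoint hbM.symm]
    calc (Finset.univ.filter (fun ω : Fin n → Bool =>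
        (∀ i ∈ M, ω i = v i) ∧ ∀ c ∈ insert b B, ∀ i ∈ c, ∀ j ∈ c, ω i = ω j)).card
        = _ + _ := by rw [hsplit, Finset.card_union_of_disjoint hdisjf]
      _ = 2 ^ (insert b B).card * 2 ^ (n - (M.card + ∑ b' ∈ insert b B, b'.card)) := by
          rw [key true, key false, Finset.card_insert_of_notMem hbB,
            Finset.sum_insert hbB, hMb]
          ring_nf

theorem stmt_13 (n : ℕ) (M : Finset (Fin n)) (B : Finset (Finset (Fin n)))
    (hne : ∀ b ∈ B, b.Nonempty)
    (hdisj : ∀ b ∈ B, ∀ b' ∈ B, b ≠ b' → Disjoint b b')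
    (hM : ∀ b ∈ B, Disjoint b M)
    (d : ℕ) (hd : d = M.card + ∑ b ∈ B, (b.card - 1)) :
    (Finset.univ.filter (fun ω : Fin n → Bool =>
        (∀ i ∈ M, ω i = true) ∧ ∀ b ∈ B, ∀ i ∈ b, ∀ j ∈ b, ω i = ω j)).card = 2 ^ (n - d) ∧
      ∑ ω ∈ Finset.univ.filter (fun ω : Fin n → Bool =>
          (∀ i ∈ M, ω i = true) ∧ ∀ b ∈ B, ∀ i ∈ b, ∀ j ∈ b, ω i = ω j),
          PMF.uniformOfFintype (Fin n → Bool) ω = (1 / 2 : ENNReal) ^ d := by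
  classical
  have hsum : ∑ b ∈ B, b.card = (∑ b ∈ B, (b.card - 1)) + B.card := by
    calc ∑ b ∈ B, b.card = ∑ b ∈ B, ((b.card - 1) + 1) :=
          Finset.sum_congr rfl (fun b hb => by have := (hne b hb).card_pos; omega)
      _ = (∑ b ∈ B, (b.card - 1)) + B.card := by
          rw [Finset.sum_add_distrib, Finset.sum_const, smul_eq_mul, mul_one]
  have hbound : M.card + ∑ b ∈ B, b.card ≤ n := by
    have hMd : Disjoint M (B.biUnion id) := by
      rw [Finset.disjoint_left]
      intro i hi hib
      obtain ⟨b, hb, hib⟩ := Finset.mem_biUnion.mp hib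
      exact Finset.disjoint_left.mp (hM b hb) hib hi
    have hT : (M ∪ B.biUnion id).card = M.card + ∑ b ∈ B, b.card := by
      rw [Finset.card_union_of_disjoint hMd]
      congr 1
      exact Finset.card_biUnion (fun b hb b' hb' h => hdisj b hb b' hb' h)
    calc M.card + ∑ b ∈ B, b.card = (M ∪ B.biUnion id).card := hT.symm
      _ ≤ Fintype.card (Fin n) := Finset.card_le_univ _
      _ = n := Fintype.card_fin n
  have hdn : d ≤ n := by omega
  have hcard : (Finset.univ.filter (fun ω : Fin n → Bool =>
      (∀ i ∈ M, ω i = true) ∧ ∀ b ∈ B, ∀ i ∈ b, ∀ j ∈ b, ω i = ω j)).card = 2 ^ (n - d) := by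
    have h := count_main n B M (fun _ => true) hne hdisj hM
    have hexp : B.card + (n - (M.card + ∑ b ∈ B, b.card)) = n - d := by
      clear h hne hdisj hM
      revert hsum hbound
      generalize (∑ b ∈ B, b.card) = S1
      rw [hd]
      generalize (∑ b ∈ B, (b.card - 1)) = S2
      intro h1 h2
      omega
    rw [h, ← pow_add, hexp]
  refine ⟨hcard, ?_⟩
  have huni : ∀ ω : Fin n → Bool,
      PMF.uniformOfFintype (Fin n → Bool) ω = ((2 ^ n : ℕ) : ENNReal)⁻¹ := by
    intro ω
    rw [PMF.uniformOfFintype_apply]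
    congr 1
    norm_cast
    simp [Fintype.card_fun]
  have hsum2 : ∑ ω ∈ Finset.univ.filter (fun ω : Fin n → Bool =>
          (∀ i ∈ M, ω i = true) ∧ ∀ b ∈ B, ∀ i ∈ b, ∀ j ∈ b, ω i = ω j),
        PMF.uniformOfFintype (Fin n → Bool) ω
      = (2 ^ (n - d)) • ((2 ^ n : ℕ) : ENNReal)⁻¹ := by
    calc ∑ ω ∈ Finset.univ.filter (fun ω : Fin n → Bool =>
            (∀ i ∈ M, ω i = true) ∧ ∀ b ∈ B, ∀ i ∈ b, ∀ j ∈ b, ω i = ω j),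
          PMF.uniformOfFintype (Fin n → Bool) ω
        = ∑ _ω ∈ Finset.univ.filter (fun ω : Fin n → Bool =>
            (∀ i ∈ M, ω i = true) ∧ ∀ b ∈ B, ∀ i ∈ b, ∀ j ∈ b, ω i = ω j),
          ((2 ^ n : ℕ) : ENNReal)⁻¹ := Finset.sum_congr rfl (fun ω _ => huni ω)
      _ = (2 ^ (n - d)) • ((2 ^ n : ℕ) : ENNReal)⁻¹ := by rw [Finset.sum_const, hcard]
  rw [hsum2, nsmul_eq_mul]
  push_cast
  have h2d0 : ((2 : ENNReal) ^ d) ≠ 0 := pow_ne_zero _ (by norm_num)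
  have h2dT : ((2 : ENNReal) ^ d) ≠ ⊤ := ENNReal.pow_ne_top (by norm_num)
  have h2nd0 : ((2 : ENNReal) ^ (n - d)) ≠ 0 := pow_ne_zero _ (by norm_num)
  have h2ndT : ((2 : ENNReal) ^ (n - d)) ≠ ⊤ := ENNReal.pow_ne_top (by norm_num)
  have h2 : (2 : ENNReal) ^ n = 2 ^ d * 2 ^ (n - d) := by
    rw [← pow_add, Nat.add_sub_cancel' hdn]
  rw [h2, ENNReal.mul_inv (Or.inl h2d0) (Or.inl h2dT)]
  rw [mul_comm ((2 : ENNReal) ^ d)⁻¹, ← mul_assoc,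
    ENNReal.mul_inv_cancel h2nd0 h2ndT, one_mul, one_div, ENNReal.inv_pow]
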